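/- Let p_1,…,p_n : ℝ^k → ℝ be continuously differentiable and L-positively homogeneous (L > 0), let ℓ be the exponential or logistic loss, 𝓛(W) = Σ_i ℓ(p_i(W)), and let W : [0,∞) → ℝ^k be a C¹ gradient flow with dW_t/dt = −∇𝓛(W_t) and 𝓛(W_0) < ℓ(0). Then ‖W_t‖ ≥ ‖W_0‖ > 0 for all t, and with W̃_t = W_t/‖W_t‖, α̃(W) = α(W)/‖W‖^L, and radial/spherical decompositions ∇_r f(W) = ⟨∇f(W), W̃⟩W̃ and ∇_⊥ f(W) = ∇f(W) − ∇_r f(W), it holds for all t that: (i) d(W̃_t)/dt = −∇_⊥𝓛(W_t)/‖W_t‖, hence ‖d(W̃_t)/dt‖ = ‖∇_⊥𝓛(W_t)‖/‖W_t‖; and (ii) d(α̃(W_t))/dt = ‖∇_r α̃(W_t)‖·‖∇_r 𝓛(W_t)‖ + ‖∇_⊥ α̃(W_t)‖·‖∇_⊥ 𝓛(W_t)‖. -/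

import Mathlib

open Filter

structure NiceLoss (ℓ : ℝ → ℝ) where
  D : ℝ → ℝ
  F : ℝ → ℝ
  pos : ∀ z, 0 < ℓ z
  hD : ∀ z, HasDerivAt ℓ (D z) z
  Dneg : ∀ z, D z < 0
  left_inv : ∀ z, F (ℓ z) = z
  right_inv : ∀ y, 0 < y → ℓ (F y) = y
  hF : ∀ y, 0 < y → HasDerivAt F (D (F y))⁻¹ y
  key : ∀ a z, 0 < a → a ≤ z → a * (-D a) * ℓ z ≤ z * (-D z) * ℓ a

namespace NiceLoss

variable {ℓ : ℝ → ℝ}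

theorem anti (N : NiceLoss ℓ) : StrictAnti ℓ := by
  have h : StrictAntiOn ℓ Set.univ := by
    apply strictAntiOn_of_hasDerivWithinAt_neg (convex_univ) (f' := N.D)
    · exact fun x hx => ((N.hD x).continuousAt).continuousWithinAt
    · intro x hx; exact (N.hD x).hasDerivWithinAt
    · intro x hx; exact N.Dneg x
  exact strictAntiOn_univ.mp h

theorem injective (N : NiceLoss ℓ) : Function.Injective ℓ := (NiceLoss.anti N).injective

theorem invFun_eq (N : NiceLoss ℓ) {y : ℝ} (hy : 0 < y) : Function.invFun ℓ y = N.F y := by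
  have h1 : ℓ (N.F y) = y := N.right_inv y hy
  have : Function.invFun ℓ (ℓ (N.F y)) = N.F y := Function.leftInverse_invFun N.injective _
  rw [h1] at this; exact this

end NiceLoss

noncomputable def expLoss : NiceLoss (fun z => Real.exp (-z)) where
  D := fun z => -Real.exp (-z)
  F := fun y => -Real.log y
  pos := fun z => Real.exp_pos _
  hD := by
    intro z
    exact ((Real.hasDerivAt_exp (-z)).comp z ((hasDerivAt_id z).neg)).congr_deriv (by simp)
  Dneg := fun z => neg_neg_iff_pos.mpr (Real.exp_pos _)
  left_inv := by intro z; simp [Real.log_exp]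
  right_inv := by intro y hy; simp [Real.exp_log hy]
  hF := by
    intro y hy
    have h := (Real.hasDerivAt_log (ne_of_gt hy)).neg
    refine h.congr_deriv ?_
    simp only [neg_neg, Real.exp_log hy]
    rw [inv_neg]
  key := by
    intro a z ha haz
    have h1 : 0 < Real.exp (-z) := Real.exp_pos _
    have h2 : 0 < Real.exp (-a) := Real.exp_pos _
    simp only [neg_neg]
    nlinarith [mul_pos h1 h2]

section Logistic

private lemma log_pos_aux (z : ℝ) : 0 < Real.log (1 + Real.exp (-z)) :=
  Real.log_pos (by linarith [Real.exp_pos (-z)])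

private lemma one_add_exp_pos (z : ℝ) : 0 < 1 + Real.exp (-z) := by positivity

private lemma logistic_hasDerivAt (z : ℝ) :
    HasDerivAt (fun z => Real.log (1 + Real.exp (-z)))
      (-Real.exp (-z) / (1 + Real.exp (-z))) z := by
  have h1 : HasDerivAt (fun z : ℝ => 1 + Real.exp (-z)) (-Real.exp (-z)) z := by
    simpa using (((Real.hasDerivAt_exp (-z)).comp z ((hasDerivAt_id z).neg)).const_add 1)
  exact h1.log (ne_of_gt (one_add_exp_pos z))

private lemma negD_eq (z : ℝ) :
    Real.exp (-z) / (1 + Real.exp (-z)) = 1 / (Real.exp z + 1) := by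
  rw [Real.exp_neg]
  field_simp

/-- The auxiliary function whose monotonicity gives the key inequality. -/
private noncomputable def Gaux (x : ℝ) : ℝ :=
  Real.log x - Real.log (Real.exp x + 1) - Real.log (Real.log (1 + Real.exp (-x)))

private lemma Gaux_hasDerivAt {x : ℝ} (hx : 0 < x) :
    HasDerivAt Gaux
      (x⁻¹ - Real.exp x / (Real.exp x + 1)
        + Real.exp (-x) / ((1 + Real.exp (-x)) * Real.log (1 + Real.exp (-x)))) x := by
  have h1 : HasDerivAt Real.log x⁻¹ x := Real.hasDerivAt_log (ne_of_gt hx)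
  have h2 : HasDerivAt (fun x : ℝ => Real.exp x + 1) (Real.exp x) x := by
    simpa using (Real.hasDerivAt_exp x).add_const 1
  have h2' : HasDerivAt (fun x : ℝ => Real.log (Real.exp x + 1))
      (Real.exp x / (Real.exp x + 1)) x :=
    h2.log (by positivity)
  have h3 : HasDerivAt (fun x : ℝ => Real.log (Real.log (1 + Real.exp (-x))))
      ((-Real.exp (-x) / (1 + Real.exp (-x))) / Real.log (1 + Real.exp (-x))) x :=
    (logistic_hasDerivAt x).log (ne_of_gt (log_pos_aux x))
  have := (h1.sub h2').sub h3
  refine this.congr_deriv ?_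
  field_simp
  ring

private lemma Gaux_mono : MonotoneOn Gaux (Set.Ioi (0 : ℝ)) := by
  apply monotoneOn_of_hasDerivWithinAt_nonneg (convex_Ioi (0:ℝ))
    (f' := fun x => x⁻¹ - Real.exp x / (Real.exp x + 1)
        + Real.exp (-x) / ((1 + Real.exp (-x)) * Real.log (1 + Real.exp (-x))))
  · exact fun x hx => (Gaux_hasDerivAt (by simpa using hx)).continuousAt.continuousWithinAt
  · intro x hx
    rw [interior_Ioi] at hx
    exact (Gaux_hasDerivAt hx).hasDerivWithinAt
  · intro x hx
    rw [interior_Ioi] at hx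
    have hx0 : (0:ℝ) < x := hx
    have hL : Real.log (1 + Real.exp (-x)) ≤ Real.exp (-x) := by
      have := Real.log_le_sub_one_of_pos (one_add_exp_pos x)
      linarith
    have hLpos := log_pos_aux x
    have hepos := Real.exp_pos (-x)
    have h1 : Real.exp (-x) / ((1 + Real.exp (-x)) * Real.log (1 + Real.exp (-x)))
        ≥ Real.exp (-x) / ((1 + Real.exp (-x)) * Real.exp (-x)) := by
      apply div_le_div_of_nonneg_left (le_of_lt hepos) (by positivity)
      exact mul_le_mul_of_nonneg_left hL (le_of_lt (one_add_exp_pos x))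
    have h2 : Real.exp (-x) / ((1 + Real.exp (-x)) * Real.exp (-x))
        = Real.exp x / (Real.exp x + 1) := by
      rw [Real.exp_neg]
      have := Real.exp_pos x
      field_simp
    have h3 : (0:ℝ) < x⁻¹ := by positivity
    rw [h2] at h1
    linarith

private lemma exp_Gaux (x : ℝ) (hx : 0 < x) :
    Real.exp (Gaux x) = x / ((Real.exp x + 1) * Real.log (1 + Real.exp (-x))) := by
  unfold Gaux
  rw [Real.exp_sub, Real.exp_sub, Real.exp_log hx, Real.exp_log (by positivity),
    Real.exp_log (log_pos_aux x)]
  rw [div_div]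

noncomputable def logLoss : NiceLoss (fun z => Real.log (1 + Real.exp (-z))) where
  D := fun z => -Real.exp (-z) / (1 + Real.exp (-z))
  F := fun y => -Real.log (Real.exp y - 1)
  pos := log_pos_aux
  hD := logistic_hasDerivAt
  Dneg := by
    intro z
    have := Real.exp_pos (-z)
    have := one_add_exp_pos z
    exact div_neg_of_neg_of_pos (by linarith) (by linarith)
  left_inv := by
    intro z
    rw [Real.exp_log (one_add_exp_pos z)]
    simp [Real.log_exp]
  right_inv := by
    intro y hy
    have h1 : (0:ℝ) < Real.exp y - 1 := by
      have : (1:ℝ) < Real.exp y := by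
        rw [show (1:ℝ) = Real.exp 0 by simp]
        exact Real.exp_lt_exp.mpr hy
      linarith
    rw [neg_neg, Real.exp_log h1]
    have : 1 + (Real.exp y - 1) = Real.exp y := by ring
    rw [this, Real.log_exp]
  hF := by
    intro y hy
    have h1 : (0:ℝ) < Real.exp y - 1 := by
      have : (1:ℝ) < Real.exp y := by
        rw [show (1:ℝ) = Real.exp 0 by simp]
        exact Real.exp_lt_exp.mpr hy
      linarith
    have h2 : HasDerivAt (fun y : ℝ => Real.exp y - 1) (Real.exp y) y := by
      simpa using (Real.hasDerivAt_exp y).sub_const 1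
    have h3 := (h2.log (ne_of_gt h1)).neg
    refine h3.congr_deriv ?_
    have hF : Real.exp (-(-Real.log (Real.exp y - 1))) = Real.exp y - 1 := by
      rw [neg_neg, Real.exp_log h1]
    simp only [hF]
    have h5 : 1 + (Real.exp y - 1) = Real.exp y := by ring
    rw [h5, neg_div, inv_neg, inv_div]
  key := by
    intro a z ha haz
    have hz : 0 < z := lt_of_lt_of_le ha haz
    have hGa := Gaux_mono (Set.mem_Ioi.mpr ha) (Set.mem_Ioi.mpr hz) haz
    have hE := Real.exp_le_exp.mpr hGa
    rw [exp_Gaux a ha, exp_Gaux z hz] at hE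
    have hLa := log_pos_aux a
    have hLz := log_pos_aux z
    have hDa : (0:ℝ) < Real.exp a + 1 := by positivity
    have hDz : (0:ℝ) < Real.exp z + 1 := by positivity
    simp only [neg_div, neg_neg, negD_eq]
    rw [div_le_div_iff₀ (by positivity) (by positivity)] at hE
    have e1 : a * (1/(Real.exp a+1)) * Real.log (1 + Real.exp (-z))
        = a * Real.log (1 + Real.exp (-z)) / (Real.exp a + 1) := by ring
    have e2 : z * (1/(Real.exp z+1)) * Real.log (1 + Real.exp (-a))
        = z * Real.log (1 + Real.exp (-a)) / (Real.exp z + 1) := by ring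
    rw [e1, e2, div_le_div_iff₀ hDa hDz]
    calc a * Real.log (1 + Real.exp (-z)) * (Real.exp z + 1)
        = a * ((Real.exp z + 1) * Real.log (1 + Real.exp (-z))) := by ring
      _ ≤ z * ((Real.exp a + 1) * Real.log (1 + Real.exp (-a))) := hE
      _ = z * Real.log (1 + Real.exp (-a)) * (Real.exp a + 1) := by ring
  end Logistic


open InnerProductSpace
open scoped RealInnerProductSpace

section Helpers

variable {k : ℕ}

local notation "E" => EuclideanSpace ℝ (Fin k)

lemma hasGradientAt_of_hasFDerivAt' {f : E → ℝ} {Φ : E →L[ℝ] ℝ} {g x : E}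
    (h : HasFDerivAt f Φ x) (hg : ∀ v, Φ v = ⟪g, v⟫) : HasGradientAt f g x := by
  have hd : toDual ℝ E g = Φ := by
    ext v
    rw [toDual_apply_apply, hg v]
  rw [hasGradientAt_iff_hasFDerivAt, hd]
  exact h

lemma hasFDerivAt_norm' {x : E} (hx : x ≠ 0) :
    HasFDerivAt (fun y : E => ‖y‖) (‖x‖⁻¹ • innerSL ℝ x) x := by
  have hnx : (0:ℝ) < ‖x‖ := norm_pos_iff.mpr hx
  have h1 : HasFDerivAt (fun y : E => ⟪y, y⟫) (2 • innerSL ℝ x) x := by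
    have := (hasFDerivAt_id x).inner ℝ (hasFDerivAt_id x)
    refine this.congr_fderiv ?_
    ext v
    simp [fderivInnerCLM, two_smul]
    exact real_inner_comm x v
  have h2 : HasDerivAt Real.sqrt (1 / (2 * Real.sqrt ⟪x, x⟫)) ⟪x, x⟫ := by
    apply Real.hasDerivAt_sqrt
    rw [real_inner_self_eq_norm_mul_norm]
    positivity
  have h3 := h2.comp_hasFDerivAt_of_eq x h1 rfl
  have heq : (fun y : E => Real.sqrt ⟪y, y⟫) = fun y : E => ‖y‖ := by
    funext y
    rw [real_inner_self_eq_norm_mul_norm, Real.sqrt_mul_self (norm_nonneg y)]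
  simp only [Function.comp_def] at h3
  rw [heq] at h3
  refine h3.congr_fderiv ?_
  have hs : Real.sqrt ⟪x, x⟫ = ‖x‖ := by
    rw [real_inner_self_eq_norm_mul_norm, Real.sqrt_mul_self (norm_nonneg x)]
  ext v
  simp only [ContinuousLinearMap.coe_smul', Pi.smul_apply, innerSL_apply_apply, smul_eq_mul, hs]
  field_simp
  ring

end Helpers


set_option maxHeartbeats 1000000 in
theorem statement_14
    (n k : ℕ) (hn : 0 < n) (L : ℝ) (hL : 0 < L)
    (p : Fin n → EuclideanSpace ℝ (Fin k) → ℝ)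
    (hp : ∀ i, ContDiff ℝ 1 (p i))
    (hhom : ∀ i (c : ℝ), 0 < c → ∀ W, p i (c • W) = c ^ L * p i W)
    (ℓ : ℝ → ℝ)
    (hℓ : ℓ = (fun z => Real.exp (-z)) ∨ ℓ = fun z => Real.log (1 + Real.exp (-z)))
    (𝓛 : EuclideanSpace ℝ (Fin k) → ℝ)
    (h𝓛 : 𝓛 = fun W => ∑ i, ℓ (p i W))
    (α : EuclideanSpace ℝ (Fin k) → ℝ)
    (hα : α = fun W => Function.invFun ℓ (𝓛 W))
    (αt : EuclideanSpace ℝ (Fin k) → ℝ)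
    (hαt : αt = fun W => α W / ‖W‖ ^ L)
    (W : ℝ → EuclideanSpace ℝ (Fin k))
    (hW : ∀ t : ℝ, 0 ≤ t → HasDerivAt W (-gradient 𝓛 (W t)) t)
    (hinit : 𝓛 (W 0) < ℓ 0) :
    0 < ‖W 0‖ ∧
    ∀ t : ℝ, 0 ≤ t →
      ‖W 0‖ ≤ ‖W t‖ ∧
      HasDerivAt (fun τ => ‖W τ‖⁻¹ • W τ)
        (-(‖W t‖⁻¹ •
          (gradient 𝓛 (W t) -
            ⟪gradient 𝓛 (W t), ‖W t‖⁻¹ • W t⟫ • (‖W t‖⁻¹ • W t)))) t ∧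
      ‖-(‖W t‖⁻¹ •
          (gradient 𝓛 (W t) -
            ⟪gradient 𝓛 (W t), ‖W t‖⁻¹ • W t⟫ • (‖W t‖⁻¹ • W t)))‖ =
        ‖gradient 𝓛 (W t) -
            ⟪gradient 𝓛 (W t), ‖W t‖⁻¹ • W t⟫ • (‖W t‖⁻¹ • W t)‖ / ‖W t‖ ∧
      HasDerivAt (fun τ => αt (W τ))
        (‖⟪gradient αt (W t), ‖W t‖⁻¹ • W t⟫ • (‖W t‖⁻¹ • W t)‖ *
            ‖⟪gradient 𝓛 (W t), ‖W t‖⁻¹ • W t⟫ • (‖W t‖⁻¹ • W t)‖ +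
          ‖gradient αt (W t) -
              ⟪gradient αt (W t), ‖W t‖⁻¹ • W t⟫ • (‖W t‖⁻¹ • W t)‖ *
            ‖gradient 𝓛 (W t) -
              ⟪gradient 𝓛 (W t), ‖W t‖⁻¹ • W t⟫ • (‖W t‖⁻¹ • W t)‖) t := by

  classical
  obtain ⟨N⟩ : Nonempty (NiceLoss ℓ) := by
    rcases hℓ with rfl | rfl
    exacts [⟨expLoss⟩, ⟨logLoss⟩]
  clear hℓ
  have hFin : Nonempty (Fin n) := ⟨⟨0, hn⟩⟩
  have hLeval : ∀ x, 𝓛 x = ∑ i, ℓ (p i x) := fun x => by rw [h𝓛]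
  have hp0 : ∀ i, p i 0 = 0 := by
    intro i
    have h2 := hhom i 2 (by norm_num) 0
    rw [smul_zero] at h2
    have h2L : (1:ℝ) < (2:ℝ) ^ L := by
      rw [Real.one_lt_rpow_iff_of_pos (by norm_num)]
      exact Or.inl ⟨by norm_num, hL⟩
    nlinarith [h2]
  have h𝓛pos : ∀ x, 0 < 𝓛 x := by
    intro x
    rw [hLeval]
    exact Finset.sum_pos (fun i _ => N.pos _) Finset.univ_nonempty
  have hpd : ∀ i (x : EuclideanSpace ℝ (Fin k)), HasFDerivAt (p i) (fderiv ℝ (p i) x) x :=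
    fun i x => (((hp i).differentiable one_ne_zero) x).hasFDerivAt
  have hEuler : ∀ i (x : EuclideanSpace ℝ (Fin k)), fderiv ℝ (p i) x x = L * p i x := by
    intro i x
    have hsc : HasDerivAt (fun c : ℝ => c • x) x 1 := by
      simpa using (hasDerivAt_id (1:ℝ)).smul_const x
    have h1 : HasDerivAt (fun c : ℝ => p i (c • x)) (fderiv ℝ (p i) x x) 1 :=
      (hpd i x).comp_hasDerivAt_of_eq 1 hsc (one_smul ℝ x).symm
    have h2 : HasDerivAt (fun c : ℝ => c ^ L) (L * (1:ℝ) ^ (L - 1)) 1 :=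
      Real.hasDerivAt_rpow_const (Or.inl one_ne_zero)
    have h2' := h2.mul_const (p i x)
    rw [Real.one_rpow, mul_one] at h2'
    have hev : (fun c : ℝ => c ^ L * p i x) =ᶠ[nhds (1:ℝ)] fun c => p i (c • x) := by
      filter_upwards [Ioi_mem_nhds (show (0:ℝ) < 1 by norm_num)] with c hc
      rw [hhom i c hc x]
    have h4 := h2'.congr_of_eventuallyEq hev.symm
    exact h1.unique h4
  have hLd : ∀ x, HasFDerivAt 𝓛 (∑ i, N.D (p i x) • fderiv ℝ (p i) x) x := by
    intro x
    rw [h𝓛]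
    apply HasFDerivAt.fun_sum
    intro i _
    exact (N.hD (p i x)).comp_hasFDerivAt x (hpd i x)
  have hgradFD : ∀ x, HasFDerivAt 𝓛
      (InnerProductSpace.toDual ℝ (EuclideanSpace ℝ (Fin k)) (gradient 𝓛 x)) x :=
    fun x => ((hLd x).differentiableAt.hasGradientAt).hasFDerivAt
  have hginner : ∀ x v, ⟪gradient 𝓛 x, v⟫ = ∑ i, N.D (p i x) * fderiv ℝ (p i) x v := by
    intro x v
    have huniq := (hgradFD x).unique (hLd x)
    calc ⟪gradient 𝓛 x, v⟫
        = InnerProductSpace.toDual ℝ (EuclideanSpace ℝ (Fin k)) (gradient 𝓛 x) v :=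
          (InnerProductSpace.toDual_apply_apply).symm
      _ = (∑ i, N.D (p i x) • fderiv ℝ (p i) x) v := by rw [huniq]
      _ = ∑ i, N.D (p i x) * fderiv ℝ (p i) x v := by
          simp [ContinuousLinearMap.sum_apply]
  have hgW : ∀ x, ⟪gradient 𝓛 x, x⟫ = L * ∑ i, N.D (p i x) * p i x := by
    intro x
    rw [hginner x x, Finset.mul_sum]
    exact Finset.sum_congr rfl fun i _ => by rw [hEuler i x]; ring
  have hφ : ∀ t, 0 ≤ t → HasDerivAt (fun τ => 𝓛 (W τ)) (-‖gradient 𝓛 (W t)‖^2) t := by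
    intro t ht
    have h1 := (hgradFD (W t)).comp_hasDerivAt t (hW t ht)
    refine h1.congr_deriv ?_
    rw [InnerProductSpace.toDual_apply_apply, inner_neg_right, real_inner_self_eq_norm_sq]
  have hLmono : AntitoneOn (fun τ => 𝓛 (W τ)) (Set.Ici 0) := by
    apply antitoneOn_of_deriv_nonpos (convex_Ici 0)
    · intro τ hτ
      exact ((hφ τ hτ).continuousAt).continuousWithinAt
    · intro τ hτ
      rw [interior_Ici] at hτ
      exact (hφ τ (le_of_lt hτ)).differentiableAt.differentiableWithinAt
    · intro τ hτ
      rw [interior_Ici] at hτ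
      rw [(hφ τ (le_of_lt hτ)).deriv]
      exact neg_nonpos.mpr (sq_nonneg _)
  have hLle : ∀ t, 0 ≤ t → 𝓛 (W t) ≤ 𝓛 (W 0) := fun t ht =>
    hLmono Set.self_mem_Ici (Set.mem_Ici.mpr ht) ht
  have hcore : ∀ t, 0 ≤ t →
      ⟪gradient 𝓛 (W t), W t⟫ ≤ L * (N.F (𝓛 (W t)) * N.D (N.F (𝓛 (W t)))) ∧
      0 < N.F (𝓛 (W t)) := by
    intro t ht
    have hApos : 0 < 𝓛 (W t) := h𝓛pos _
    have hAlt : 𝓛 (W t) < ℓ 0 := lt_of_le_of_lt (hLle t ht) hinit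
    have hℓαv : ℓ (N.F (𝓛 (W t))) = 𝓛 (W t) := N.right_inv _ hApos
    have hαvpos : 0 < N.F (𝓛 (W t)) := by
      apply (N.anti.lt_iff_gt).mp
      rw [hℓαv]; exact hAlt
    have hile : ∀ i, N.F (𝓛 (W t)) ≤ p i (W t) := by
      intro i
      apply (N.anti.le_iff_ge).mp
      rw [hℓαv, hLeval]
      exact Finset.single_le_sum (fun j _ => (N.pos (p j (W t))).le) (Finset.mem_univ i)
    have hterm : ∀ i ∈ Finset.univ,
        N.F (𝓛 (W t)) * (-N.D (N.F (𝓛 (W t)))) * ℓ (p i (W t))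
          ≤ p i (W t) * (-N.D (p i (W t))) * ℓ (N.F (𝓛 (W t))) :=
      fun i _ => N.key _ _ hαvpos (hile i)
    have hsum1 := Finset.sum_le_sum hterm
    rw [← Finset.mul_sum, ← Finset.sum_mul, ← hLeval, hℓαv] at hsum1
    have h2 := (mul_le_mul_iff_left₀ hApos).mp hsum1
    have h3 : ∑ i, N.D (p i (W t)) * p i (W t)
        ≤ N.F (𝓛 (W t)) * N.D (N.F (𝓛 (W t))) := by
      have hneg : ∑ i, p i (W t) * (-N.D (p i (W t)))
          = -∑ i, N.D (p i (W t)) * p i (W t) := by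
        rw [← Finset.sum_neg_distrib]
        exact Finset.sum_congr rfl fun i _ => by ring
      rw [hneg] at h2
      linarith
    refine ⟨?_, hαvpos⟩
    rw [hgW]
    exact mul_le_mul_of_nonneg_left h3 hL.le
  have hψ : ∀ t, 0 ≤ t →
      HasDerivAt (fun τ => (⟪W τ, W τ⟫ : ℝ)) (-(2 * ⟪gradient 𝓛 (W t), W t⟫)) t := by
    intro t ht
    have h1 := (hW t ht).inner ℝ (hW t ht)
    refine h1.congr_deriv ?_
    rw [inner_neg_right, inner_neg_left, real_inner_comm]
    ring
  have hψmono : MonotoneOn (fun τ => (⟪W τ, W τ⟫ : ℝ)) (Set.Ici 0) := by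
    apply monotoneOn_of_deriv_nonneg (convex_Ici 0)
    · intro τ hτ
      exact ((hψ τ hτ).continuousAt).continuousWithinAt
    · intro τ hτ
      rw [interior_Ici] at hτ
      exact (hψ τ (le_of_lt hτ)).differentiableAt.differentiableWithinAt
    · intro τ hτ
      rw [interior_Ici] at hτ
      rw [(hψ τ (le_of_lt hτ)).deriv]
      obtain ⟨hip, hαvpos⟩ := hcore τ (le_of_lt hτ)
      have hD := N.Dneg (N.F (𝓛 (W τ)))
      have hneg : L * (N.F (𝓛 (W τ)) * N.D (N.F (𝓛 (W τ)))) < 0 :=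
        mul_neg_of_pos_of_neg hL (mul_neg_of_pos_of_neg hαvpos hD)
      linarith
  have hnorm : ∀ t, 0 ≤ t → ‖W 0‖ ≤ ‖W t‖ := by
    intro t ht
    have h1 : (⟪W 0, W 0⟫ : ℝ) ≤ ⟪W t, W t⟫ := hψmono Set.self_mem_Ici (Set.mem_Ici.mpr ht) ht
    rw [real_inner_self_eq_norm_mul_norm, real_inner_self_eq_norm_mul_norm] at h1
    nlinarith [norm_nonneg (W 0), norm_nonneg (W t)]
  have hW0 : W 0 ≠ 0 := by
    intro h0
    have he : 𝓛 (W 0) = n * ℓ 0 := by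
      rw [hLeval, h0]
      simp [hp0]
    have hn1 : (1:ℝ) ≤ n := by exact_mod_cast hn
    nlinarith [N.pos 0, hinit]
  refine ⟨norm_pos_iff.mpr hW0, fun t ht => ?_⟩
  have hWtne : W t ≠ 0 := by
    intro h
    have h1 := hnorm t ht
    rw [h, norm_zero] at h1
    exact hW0 (norm_le_zero_iff.mp h1)
  have hn₁pos : 0 < ‖W t‖ := norm_pos_iff.mpr hWtne
  refine ⟨hnorm t ht, ?_, ?_, ?_⟩
  · -- derivative of the normalized iterate
    have hc : HasFDerivAt (fun y : EuclideanSpace ℝ (Fin k) => ‖y‖⁻¹)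
        ((-(‖W t‖^2)⁻¹) • (‖W t‖⁻¹ • innerSL ℝ (W t))) (W t) := by
      have h2 : HasDerivAt (fun s : ℝ => s⁻¹) (-(‖W t‖^2)⁻¹) ‖W t‖ :=
        hasDerivAt_inv (ne_of_gt hn₁pos)
      exact h2.comp_hasFDerivAt (W t) (hasFDerivAt_norm' hWtne)
    have hNfd := hc.smul (hasFDerivAt_id (W t))
    have hder := hNfd.comp_hasDerivAt t (hW t ht)
    refine hder.congr_deriv ?_
    simp only [ContinuousLinearMap.add_apply, ContinuousLinearMap.coe_smul', Pi.smul_apply,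
      ContinuousLinearMap.smulRight_apply, ContinuousLinearMap.coe_id', id_eq,
      innerSL_apply_apply, smul_eq_mul, inner_neg_right, real_inner_smul_right, smul_sub, smul_neg]
    rw [real_inner_comm (W t) (gradient 𝓛 (W t))]
    match_scalars
    all_goals field_simp
    all_goals try ring
    all_goals tauto
  · rw [norm_neg, norm_smul, norm_inv, norm_norm, ← div_eq_inv_mul]
  · -- derivative of the normalized smoothed margin
    have hApos : 0 < 𝓛 (W t) := h𝓛pos (W t)
    set g := gradient 𝓛 (W t) with hgdef
    set A := 𝓛 (W t) with hA
    set αv := N.F A with hαvdef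
    have hαvpos : 0 < αv := (hcore t ht).2
    have hipLe : (⟪g, W t⟫ : ℝ) ≤ L * (αv * N.D αv) := (hcore t ht).1
    have hDαv : N.D αv < 0 := N.Dneg αv
    have hipneg : (⟪g, W t⟫ : ℝ) ≤ 0 := by
      nlinarith [mul_neg_of_pos_of_neg hαvpos hDαv]
    set P := ‖W t‖ ^ L with hPdef
    have hPpos : 0 < P := Real.rpow_pos_of_pos hn₁pos L
    have hn₁ne : ‖W t‖ ≠ 0 := ne_of_gt hn₁pos
    have hPne : P ≠ 0 := ne_of_gt hPpos
    have hDne : N.D αv ≠ 0 := ne_of_lt hDαv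
    have hPL : ‖W t‖ ^ (L - 1) = P * ‖W t‖⁻¹ := by
      rw [hPdef, Real.rpow_sub hn₁pos, Real.rpow_one, div_eq_mul_inv]
    have hαt2 : αt = fun x => N.F (𝓛 x) * ((‖x‖ ^ L)⁻¹) := by
      funext x
      rw [hαt]
      simp only
      rw [hα]
      simp only
      rw [N.invFun_eq (h𝓛pos x), div_eq_mul_inv]
    have h1 : HasFDerivAt (fun x => N.F (𝓛 x))
        ((N.D αv)⁻¹ • (InnerProductSpace.toDual ℝ (EuclideanSpace ℝ (Fin k)) g)) (W t) :=
      (N.hF A hApos).comp_hasFDerivAt_of_eq (W t) (hgradFD (W t)) hA.symm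
    have h2 : HasFDerivAt (fun x : EuclideanSpace ℝ (Fin k) => ‖x‖ ^ L)
        ((L * ‖W t‖ ^ (L - 1)) • (‖W t‖⁻¹ • innerSL ℝ (W t))) (W t) :=
      (Real.hasDerivAt_rpow_const (Or.inl hn₁ne)).comp_hasFDerivAt (W t)
        (hasFDerivAt_norm' hWtne)
    have h3 : HasFDerivAt (fun x : EuclideanSpace ℝ (Fin k) => (‖x‖ ^ L)⁻¹)
        ((-(P ^ 2)⁻¹) • ((L * ‖W t‖ ^ (L - 1)) • (‖W t‖⁻¹ • innerSL ℝ (W t)))) (W t) :=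
      (hasDerivAt_inv hPne).comp_hasFDerivAt_of_eq (W t) h2 hPdef.symm
    have h4 := h1.mul h3
    set a := (N.D αv * P)⁻¹ with hadef
    set b := -(αv * L) / (P * ‖W t‖ * ‖W t‖) with hbdef
    have hane : a ≤ 0 := by
      rw [hadef]
      exact inv_nonpos.mpr (le_of_lt (mul_neg_of_neg_of_pos hDαv hPpos))
    have hGt : HasGradientAt αt (a • g + b • W t) (W t) := by
      rw [hαt2]
      apply hasGradientAt_of_hasFDerivAt' h4
      intro v
      simp only [ContinuousLinearMap.add_apply, ContinuousLinearMap.coe_smul', Pi.smul_apply,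
        ContinuousLinearMap.smulRight_apply, innerSL_apply_apply, smul_eq_mul,
        InnerProductSpace.toDual_apply_apply, inner_add_left, real_inner_smul_left]
      rw [hPL]
      rw [← hA, ← hαvdef]
      rw [hadef, hbdef, ← hPdef]
      field_simp [hn₁ne, hPne, hDne]
      ring
    have hgradeq : gradient αt (W t) = a • g + b • W t := hGt.gradient
    have hder := hGt.hasFDerivAt.comp_hasDerivAt t (hW t ht)
    refine hder.congr_deriv ?_
    rw [hgradeq, InnerProductSpace.toDual_apply_apply]
    set u : EuclideanSpace ℝ (Fin k) := ‖W t‖⁻¹ • W t with hudef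
    set ip := (⟪g, W t⟫ : ℝ) with hipdef
    have huu : (⟪u, u⟫ : ℝ) = 1 := by
      rw [hudef, real_inner_smul_left, real_inner_smul_right, real_inner_self_eq_norm_mul_norm]
      field_simp
    have hnu : ‖u‖ = 1 := by
      rw [hudef, norm_smul, norm_inv, norm_norm]
      field_simp
    have hgu : (⟪g, u⟫ : ℝ) = ‖W t‖⁻¹ * ip := by rw [hudef, real_inner_smul_right]
    have hWu : (⟪W t, u⟫ : ℝ) = ‖W t‖ := by
      rw [hudef, real_inner_smul_right, real_inner_self_eq_norm_mul_norm]
      field_simp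
    have hbW : (b * ‖W t‖) • u = b • W t := by
      rw [hudef, smul_smul]
      congr 1
      field_simp
    have hGtu : (⟪a • g + b • W t, u⟫ : ℝ) = a * (‖W t‖⁻¹ * ip) + b * ‖W t‖ := by
      rw [inner_add_left, real_inner_smul_left, real_inner_smul_left, hgu, hWu]
    have hr1eq : a * (‖W t‖⁻¹ * ip) + b * ‖W t‖
        = (ip - L * (αv * N.D αv)) / (N.D αv * P * ‖W t‖) := by
      rw [hadef, hbdef]
      field_simp
      ring
    have hr1 : 0 ≤ a * (‖W t‖⁻¹ * ip) + b * ‖W t‖ := by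
      rw [hr1eq]
      rw [div_nonneg_iff]
      refine Or.inr ⟨by linarith [hipLe], le_of_lt ?_⟩
      exact mul_neg_of_neg_of_pos (mul_neg_of_neg_of_pos hDαv hPpos) hn₁pos
    have hgu0 : (⟪g, u⟫ : ℝ) ≤ 0 := by
      rw [hgu]
      have h0 : (0:ℝ) ≤ ‖W t‖⁻¹ := inv_nonneg.mpr (norm_nonneg _)
      nlinarith
    have hperp : a • g + b • W t - (⟪a • g + b • W t, u⟫ : ℝ) • u
        = a • (g - (⟪g, u⟫ : ℝ) • u) := by
      rw [hGtu, hgu, add_smul, hbW]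
      module
    have hnormGperp : ‖a • g + b • W t - (⟪a • g + b • W t, u⟫ : ℝ) • u‖
        = -a * ‖g - (⟪g, u⟫ : ℝ) • u‖ := by
      rw [hperp, norm_smul, Real.norm_eq_abs, abs_of_nonpos hane]
    have hnr1 : ‖(⟪a • g + b • W t, u⟫ : ℝ) • u‖ = a * (‖W t‖⁻¹ * ip) + b * ‖W t‖ := by
      rw [norm_smul, hnu, mul_one, Real.norm_eq_abs, hGtu, abs_of_nonneg hr1]
    have hnr2 : ‖(⟪g, u⟫ : ℝ) • u‖ = -(‖W t‖⁻¹ * ip) := by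
      rw [norm_smul, hnu, mul_one, Real.norm_eq_abs, abs_of_nonpos hgu0, hgu]
    have hqq : ‖g - (⟪g, u⟫ : ℝ) • u‖ * ‖g - (⟪g, u⟫ : ℝ) • u‖
        = (⟪g, g⟫ : ℝ) - (‖W t‖⁻¹ * ip) * (‖W t‖⁻¹ * ip) := by
      rw [← real_inner_self_eq_norm_mul_norm]
      simp only [inner_sub_left, inner_sub_right, real_inner_smul_left, real_inner_smul_right,
        huu]
      have hug : (⟪u, g⟫ : ℝ) = ‖W t‖⁻¹ * ip := by rw [real_inner_comm]; exact hgu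
      rw [hug, hgu]
      ring
    have hWtg : (⟪W t, g⟫ : ℝ) = ip := by rw [real_inner_comm]
    rw [hnr1, hnr2, hnormGperp, inner_neg_right, inner_add_left, real_inner_smul_left,
      real_inner_smul_left, hWtg]
    rw [mul_assoc, hqq]
    field_simp
    ring
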